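/- For every ribbon graph (α, σ) with e edges, n vertices and f faces, the integer n − e + f is even and satisfies n − e + f ≤ 2. Equivalently, the genus g defined by the Euler relation n − e + f = 2 − 2g is a nonnegative integer. -/

import Mathlib

/-- The number of cycles (orbits, including fixed points) of a permutation. -/
noncomputable def permCycleCount {H : Type*} (σ : Equiv.Perm H) : ℕ :=
  Nat.card (Quot σ.SameCycle)


open Equiv Equiv.Perm Subgroup

set_option linter.unusedSectionVars false

variable {H : Type*} [Fintype H] [DecidableEq H]

lemma closure_respects {β : Sort*} (S : Set (Perm H)) (f : H → β)
    (h : ∀ s ∈ S, ∀ x, f (s x) = f x) :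
    ∀ g ∈ Subgroup.closure S, ∀ x, f (g x) = f x := by
  intro g hg
  induction hg using Subgroup.closure_induction with
  | mem s hs => exact h s hs
  | one => intro x; rfl
  | mul a b _ _ ha hb => intro x; simpa [Equiv.Perm.mul_apply] using (ha (b x)).trans (hb x)
  | inv a _ ha => intro x; simpa using (ha (a⁻¹ x)).symm

lemma sc_respects {β : Sort*} (τ : Perm H) (f : H → β)
    (h : ∀ x, f (τ x) = f x) {x y : H} (hxy : τ.SameCycle x y) : f x = f y := by
  obtain ⟨i, rfl⟩ := hxy
  have hmem : (τ : Perm H) ^ i ∈ Subgroup.closure ({τ} : Set (Perm H)) :=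
    Subgroup.zpow_mem _ (Subgroup.subset_closure (Set.mem_singleton τ)) i
  exact (closure_respects {τ} f (by simpa using h) (τ ^ i) hmem x).symm

/-- monotone: coarser relation has at most as many classes -/
lemma card_quot_le (r r' : H → H → Prop)
    (h : ∀ x y, r x y → Quot.mk r' x = Quot.mk r' y) :
    Nat.card (Quot r') ≤ Nat.card (Quot r) := by
  have hs : Function.Surjective (Quot.lift (Quot.mk r') h) := by
    intro c; obtain ⟨x, rfl⟩ := Quot.exists_rep c; exact ⟨Quot.mk r x, rfl⟩
  exact Nat.card_le_card_of_surjective _ hs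

lemma card_sub_one {A : Type*} [Finite A] (c : A) :
    Nat.card {x : A // x ≠ c} + 1 = Nat.card A := by
  classical
  letI : Fintype A := Fintype.ofFinite A
  rw [Nat.card_eq_fintype_card, Nat.card_eq_fintype_card]
  have h : Fintype.card {x : A // ¬ x = c} = Fintype.card A - Fintype.card {x : A // x = c} :=
    Fintype.card_subtype_compl _
  rw [Fintype.card_subtype_eq] at h
  have hpos : 1 ≤ Fintype.card A := Fintype.card_pos_iff.mpr ⟨c⟩
  have he : Fintype.card {x : A // x ≠ c} = Fintype.card {x : A // ¬ x = c} := rfl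
  omega

/-- a surjection that identifies two distinct points loses at least one -/
lemma card_add_one_le {A B : Type*} [Finite A] (F : A → B) (hs : Function.Surjective F)
    {c d : A} (hcd : c ≠ d) (hF : F c = F d) : Nat.card B + 1 ≤ Nat.card A := by
  classical
  have hs' : Function.Surjective (fun x : {x : A // x ≠ c} => F x.1) := by
    intro b
    obtain ⟨a, rfl⟩ := hs b
    by_cases hac : a = c
    · exact ⟨⟨d, hcd.symm⟩, by rw [hac]; exact hF.symm⟩
    · exact ⟨⟨a, hac⟩, rfl⟩
  have h1 : Nat.card B ≤ Nat.card {x : A // x ≠ c} :=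
    Nat.card_le_card_of_surjective _ hs'
  have h2 := card_sub_one c
  omega


/-- adding one identification (a ~ b) to a relation loses at most one class -/
lemma card_quot_le_succ (r r' : H → H → Prop) (a b : H)
    (hrr' : ∀ x y, r x y → Quot.mk r' x = Quot.mk r' y)
    (hab : Quot.mk r' a = Quot.mk r' b)
    (h3 : ∀ x y, r' x y →
      Relation.EqvGen (fun u v => r u v ∨ (u = a ∧ v = b) ∨ (u = b ∧ v = a)) x y) :
    Nat.card (Quot r) ≤ Nat.card (Quot r') + 1 := by
  classical
  let g : Quot r → Quot r := fun c => if c = Quot.mk r b then Quot.mk r a else c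
  have hga : g (Quot.mk r a) = Quot.mk r a := by
    by_cases hh : Quot.mk r a = Quot.mk r b <;> simp [g, hh]
  have hgb : g (Quot.mk r b) = Quot.mk r a := by simp [g]
  have hg0 : ∀ x y : H,
      Relation.EqvGen (fun u v => r u v ∨ (u = a ∧ v = b) ∨ (u = b ∧ v = a)) x y →
      g (Quot.mk r x) = g (Quot.mk r y) := by
    intro x y h
    induction h with
    | rel u v huv =>
      rcases huv with hxy | ⟨rfl, rfl⟩ | ⟨rfl, rfl⟩
      · rw [Quot.sound hxy]
      · rw [hga, hgb]
      · rw [hga, hgb]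
    | refl u => rfl
    | symm u v _ ih => exact ih.symm
    | trans u v w _ _ ih1 ih2 => exact ih1.trans ih2
  have hg' : ∀ x y : H, r' x y → g (Quot.mk r x) = g (Quot.mk r y) :=
    fun x y hxy => hg0 x y (h3 x y hxy)
  let F : Quot r → Quot r' := Quot.lift (Quot.mk r') hrr'
  have hgidem : ∀ c : Quot r, g (g c) = g c := by
    intro c
    by_cases hc : c = Quot.mk r b
    · rw [hc, hgb, hga]
    · have h1 : g c = c := if_neg hc
      rw [h1, h1]
  have hg'' : ∀ x y : H, Relation.EqvGen r' x y → g (Quot.mk r x) = g (Quot.mk r y) := by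
    intro x y h
    induction h with
    | rel u v huv => exact hg' u v huv
    | refl u => rfl
    | symm u v _ ih => exact ih.symm
    | trans u v w _ _ ih1 ih2 => exact ih1.trans ih2
  have hFg : ∀ c d : Quot r, F c = F d → g c = g d := by
    intro c d
    induction c using Quot.ind with | _ x =>
    induction d using Quot.ind with | _ y =>
    intro hFcd
    exact hg'' x y (Quot.eqvGen_exact hFcd)
  -- F₂ : restrict F to classes ≠ [b], injective
  have hinj : Function.Injective
      (fun c : {c : Quot r // c ≠ Quot.mk r b} => F c.1) := by
    rintro ⟨c, hc⟩ ⟨d, hd⟩ h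
    have hcd := hFg c d h
    have h1 : g c = c := if_neg hc
    have h2 : g d = d := if_neg hd
    exact Subtype.ext (h1.symm.trans (hcd.trans h2))
  have hle : Nat.card {c : Quot r // c ≠ Quot.mk r b} ≤ Nat.card (Quot r') :=
    Nat.card_le_card_of_injective _ hinj
  have := card_sub_one (Quot.mk r b)
  omega

lemma card_sub_one' : True := trivial

section Walk
variable {ρ : Perm H} {p q : H}

-- the first time the ρ-orbit of q hits {p, q} (at exponent ≥ 1)
private lemma walk_exists (ρ : Perm H) (q p : H) :
    ∃ j, 1 ≤ j ∧ ((ρ ^ j) q = p ∨ (ρ ^ j) q = q) := by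
  refine ⟨orderOf ρ, ?_, Or.inr ?_⟩
  · exact (orderOf_pos ρ)
  · rw [pow_orderOf_eq_one]; rfl

open scoped Classical in
private noncomputable def walkJ (ρ : Perm H) (q p : H) : ℕ :=
  Nat.find (walk_exists ρ q p)

private lemma walkJ_one_le : 1 ≤ walkJ ρ q p := by
  classical
  exact (Nat.find_spec (walk_exists ρ q p)).1

private lemma walkJ_spec : (ρ ^ walkJ ρ q p) q = p ∨ (ρ ^ walkJ ρ q p) q = q := by
  classical
  exact (Nat.find_spec (walk_exists ρ q p)).2

private lemma walkJ_min {i : ℕ} (h1 : 1 ≤ i) (h2 : i < walkJ ρ q p) :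
    (ρ ^ i) q ≠ p ∧ (ρ ^ i) q ≠ q := by
  classical
  have := Nat.find_min (walk_exists ρ q p) h2
  push_neg at this
  exact this h1

private lemma walk_eq (hpq : p ≠ q) :
    ∀ i < walkJ ρ q p, ((Equiv.swap p q * ρ) ^ i) q = (ρ ^ i) q := by
  intro i
  induction i with
  | zero => intro _; simp
  | succ i ih =>
    intro hi
    have hih := ih (lt_trans (Nat.lt_succ_self i) hi)
    have hne := walkJ_min (ρ := ρ) (q := q) (p := p) (Nat.succ_le_succ (Nat.zero_le i)) hi
    have e1 : ((Equiv.swap p q * ρ) ^ (i + 1)) q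
        = (Equiv.swap p q) (ρ (((Equiv.swap p q * ρ) ^ i) q)) := by
      rw [pow_succ', Equiv.Perm.mul_apply, Equiv.Perm.mul_apply]
    have e2 : (ρ ^ (i + 1)) q = ρ ((ρ ^ i) q) := by
      rw [pow_succ', Equiv.Perm.mul_apply]
    rw [e1, hih, ← e2]
    exact Equiv.swap_apply_of_ne_of_ne hne.1 hne.2

private lemma walk_last (hpq : p ≠ q) :
    ((Equiv.swap p q * ρ) ^ walkJ ρ q p) q = Equiv.swap p q ((ρ ^ walkJ ρ q p) q) := by
  obtain ⟨i, hi⟩ : ∃ i, walkJ ρ q p = i + 1 :=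
    ⟨walkJ ρ q p - 1, by have := walkJ_one_le (ρ := ρ) (q := q) (p := p); omega⟩
  have e1 : ((Equiv.swap p q * ρ) ^ (i + 1)) q
      = (Equiv.swap p q) (ρ (((Equiv.swap p q * ρ) ^ i) q)) := by
    rw [pow_succ', Equiv.Perm.mul_apply, Equiv.Perm.mul_apply]
  have e2 : (ρ ^ (i + 1)) q = ρ ((ρ ^ i) q) := by
    rw [pow_succ', Equiv.Perm.mul_apply]
  rw [hi, e1, walk_eq hpq i (by omega), e2]

/-- W1: if p, q are NOT in the same ρ-cycle, they ARE in the same (swap p q * ρ)-cycle -/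
lemma sameCycle_swap_mul_of_not (hpq : p ≠ q) (h : ¬ ρ.SameCycle p q) :
    (Equiv.swap p q * ρ).SameCycle p q := by
  rcases walkJ_spec (ρ := ρ) (q := q) (p := p) with hP | hQ
  · exact absurd (Equiv.Perm.SameCycle.symm ⟨(walkJ ρ q p : ℤ), by simpa using hP⟩) h
  · have hthis : ((Equiv.swap p q * ρ) ^ walkJ ρ q p) q = p := by
      rw [walk_last hpq, hQ, Equiv.swap_apply_right]
    exact (Equiv.Perm.SameCycle.symm ⟨(walkJ ρ q p : ℤ), by simpa using hthis⟩)

private lemma pow_fix (τ : Perm H) (q : H) {j : ℕ} (hj : (τ ^ j) q = q) (n : ℕ) :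
    (τ ^ n) q = (τ ^ (n % j)) q := by
  have haux : ∀ s, ((τ ^ j) ^ s) q = q := by
    intro s
    induction s with
    | zero => simp
    | succ s ih => rw [pow_succ, Equiv.Perm.mul_apply, hj, ih]
  calc (τ ^ n) q = (τ ^ (n % j + j * (n / j))) q := by rw [Nat.mod_add_div]
    _ = (τ ^ (n % j)) ((τ ^ (j * (n / j))) q) := by rw [pow_add, Equiv.Perm.mul_apply]
    _ = (τ ^ (n % j)) q := by rw [pow_mul, haux]

/-- W2: if p, q ARE in the same ρ-cycle, they are NOT in the same (swap p q * ρ)-cycle -/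
lemma not_sameCycle_swap_mul (hpq : p ≠ q) (h : ρ.SameCycle p q) :
    ¬ (Equiv.swap p q * ρ).SameCycle p q := by
  classical
  have hj1 : 1 ≤ walkJ ρ q p := walkJ_one_le
  have hjp : (ρ ^ walkJ ρ q p) q = p := by
    rcases walkJ_spec (ρ := ρ) (q := q) (p := p) with hP | hQ
    · exact hP
    · exfalso
      obtain ⟨n, hnlt, hn⟩ := (h.symm).exists_pow_eq'
      have hr : (ρ ^ (n % walkJ ρ q p)) q = p := by rw [← pow_fix ρ q hQ n, hn]
      have hrlt : n % walkJ ρ q p < walkJ ρ q p := Nat.mod_lt _ (by omega)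
      rcases Nat.eq_zero_or_pos (n % walkJ ρ q p) with h0 | h1
      · rw [h0] at hr; simp at hr; exact hpq hr.symm
      · exact (walkJ_min h1 hrlt).1 hr
  intro hcon
  have hperiod : ((Equiv.swap p q * ρ) ^ walkJ ρ q p) q = q := by
    rw [walk_last hpq, hjp, Equiv.swap_apply_left]
  obtain ⟨n, hnlt, hn⟩ := (hcon.symm).exists_pow_eq'
  have hr : ((Equiv.swap p q * ρ) ^ (n % walkJ ρ q p)) q = p := by
    rw [← pow_fix _ q hperiod n, hn]
  have hrlt : n % walkJ ρ q p < walkJ ρ q p := Nat.mod_lt _ (by omega)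
  rw [walk_eq hpq _ hrlt] at hr
  rcases Nat.eq_zero_or_pos (n % walkJ ρ q p) with h0 | h1
  · rw [h0] at hr; simp at hr; exact hpq hr.symm
  · exact (walkJ_min h1 hrlt).1 hr

end Walk


lemma sameCycle_equivalence (τ : Perm H) : Equivalence τ.SameCycle :=
  ⟨fun x => Equiv.Perm.SameCycle.refl τ x, fun h => h.symm, fun h1 h2 => h1.trans h2⟩

lemma mk_eq_iff_sameCycle (τ : Perm H) (x y : H) :
    Quot.mk τ.SameCycle x = Quot.mk τ.SameCycle y ↔ τ.SameCycle x y :=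
  ⟨fun h => ((sameCycle_equivalence τ).eqvGen_iff).mp (Quot.eqvGen_exact h), Quot.sound⟩

/-- orbit relation of the subgroup generated by a set of permutations -/
def orbRel (S : Set (Perm H)) : H → H → Prop :=
  fun x y => ∃ g ∈ Subgroup.closure S, g x = y

lemma mk_orbRel {S : Set (Perm H)} {g : Perm H} (hg : g ∈ Subgroup.closure S) (x : H) :
    Quot.mk (orbRel S) (g x) = Quot.mk (orbRel S) x :=
  (Quot.sound ⟨g, hg, rfl⟩).symm

lemma sc_mk_orbRel {S : Set (Perm H)} {τ : Perm H} (hτ : τ ∈ Subgroup.closure S)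
    {x y : H} (h : τ.SameCycle x y) :
    Quot.mk (orbRel S) x = Quot.mk (orbRel S) y := by
  obtain ⟨i, rfl⟩ := h
  exact (mk_orbRel (Subgroup.zpow_mem _ hτ i) x).symm

lemma mem_closure_of_mem {S : Set (Perm H)} {g : Perm H} (hg : g ∈ S) :
    g ∈ Subgroup.closure S := Subgroup.subset_closure hg

/-- generic: multiplying by a swap decreases the cycle count by at most one -/
lemma ccount_le_swap_mul_add_one (τ : Perm H) (p q : H) :
    permCycleCount τ ≤ permCycleCount (Equiv.swap p q * τ) + 1 := by
  classical
  set t := Equiv.swap p q with ht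
  set S : Set (Perm H) := {τ, t} with hS
  have hτS : τ ∈ Subgroup.closure S := _root_.mem_closure_of_mem (by simp [hS])
  have htS : t ∈ Subgroup.closure S := _root_.mem_closure_of_mem (by simp [hS])
  have htτS : t * τ ∈ Subgroup.closure S := mul_mem htS hτS
  have h1 : Nat.card (Quot τ.SameCycle) ≤ Nat.card (Quot (orbRel S)) + 1 := by
    apply card_quot_le_succ τ.SameCycle (orbRel S) p q
    · intro x y hxy; exact sc_mk_orbRel hτS hxy
    · exact (mk_orbRel htS p).symm.trans (by rw [ht, Equiv.swap_apply_left])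
    · intro x y hxy
      obtain ⟨g, hg, rfl⟩ := hxy
      apply Quot.eqvGen_exact
      set s : H → H → Prop :=
        fun u v => τ.SameCycle u v ∨ (u = p ∧ v = q) ∨ (u = q ∧ v = p) with hs
      have := closure_respects S (Quot.mk s) ?_ g hg x
      · exact this.symm
      · rintro g' (rfl | rfl) x
        · exact Quot.sound (Or.inl ⟨-1, by simp⟩)
        · rcases eq_or_ne x p with rfl | hxp
          · rw [ht, Equiv.swap_apply_left]
            exact Quot.sound (Or.inr (Or.inr ⟨rfl, rfl⟩))
          · rcases eq_or_ne x q with rfl | hxq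
            · rw [ht, Equiv.swap_apply_right]
              exact Quot.sound (Or.inr (Or.inl ⟨rfl, rfl⟩))
            · rw [ht, Equiv.swap_apply_of_ne_of_ne hxp hxq]
  have h2 : Nat.card (Quot (orbRel S)) ≤ Nat.card (Quot (t * τ).SameCycle) :=
    card_quot_le _ _ (fun x y hxy => sc_mk_orbRel htτS hxy)
  unfold permCycleCount
  omega

/-- SPLIT: multiplying by a swap of two same-cycle points increases count by one -/
lemma split_count {ρ : Perm H} {p q : H} (hpq : p ≠ q) (h : ρ.SameCycle p q) :
    permCycleCount (Equiv.swap p q * ρ) = permCycleCount ρ + 1 := by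
  classical
  set t := Equiv.swap p q with ht
  have hupper : permCycleCount (t * ρ) ≤ permCycleCount ρ + 1 := by
    have := ccount_le_swap_mul_add_one (t * ρ) p q
    rwa [ht, ← mul_assoc, Equiv.swap_mul_self, one_mul] at this
  have hresp : ∀ x y, (t * ρ).SameCycle x y →
      Quot.mk ρ.SameCycle x = Quot.mk ρ.SameCycle y := by
    intro x y hxy
    apply sc_respects (t * ρ) (Quot.mk ρ.SameCycle) ?_ hxy
    intro x
    have step1 : Quot.mk ρ.SameCycle (t (ρ x)) = Quot.mk ρ.SameCycle (ρ x) := by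
      rcases eq_or_ne (ρ x) p with hp | hxp
      · rw [hp, ht, Equiv.swap_apply_left]; exact Quot.sound h.symm
      · rcases eq_or_ne (ρ x) q with hq | hxq
        · rw [hq, ht, Equiv.swap_apply_right]; exact Quot.sound h
        · rw [ht, Equiv.swap_apply_of_ne_of_ne hxp hxq]
    have step2 : Quot.mk ρ.SameCycle (ρ x) = Quot.mk ρ.SameCycle x :=
      (Quot.sound (⟨1, by simp [pow_one]⟩ : ρ.SameCycle x (ρ x))).symm
    calc Quot.mk ρ.SameCycle ((t * ρ) x) = Quot.mk ρ.SameCycle (t (ρ x)) := rfl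
      _ = Quot.mk ρ.SameCycle x := step1.trans step2
  have hlower : permCycleCount ρ + 1 ≤ permCycleCount (t * ρ) := by
    apply card_add_one_le (Quot.lift (Quot.mk ρ.SameCycle) hresp)
    · intro c; obtain ⟨x, rfl⟩ := Quot.exists_rep c; exact ⟨Quot.mk _ x, rfl⟩
    · show Quot.mk (t * ρ).SameCycle p ≠ Quot.mk (t * ρ).SameCycle q
      rw [ne_eq, mk_eq_iff_sameCycle]
      exact not_sameCycle_swap_mul hpq h
    · show Quot.mk ρ.SameCycle p = Quot.mk ρ.SameCycle q
      exact Quot.sound h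
  exact le_antisymm hupper hlower

/-- MERGE: multiplying by a swap of two different-cycle points decreases count by one -/
lemma merge_count {ρ : Perm H} {p q : H} (hpq : p ≠ q) (h : ¬ ρ.SameCycle p q) :
    permCycleCount ρ = permCycleCount (Equiv.swap p q * ρ) + 1 := by
  classical
  have h1 := split_count hpq (sameCycle_swap_mul_of_not hpq h)
  rwa [← mul_assoc, Equiv.swap_mul_self, one_mul] at h1

lemma ccount_le_card (τ : Perm H) : permCycleCount τ ≤ Fintype.card H := by
  have hs : Function.Surjective (Quot.mk τ.SameCycle) := Quot.exists_rep
  have := Nat.card_le_card_of_surjective _ hs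
  simpa [Nat.card_eq_fintype_card, permCycleCount] using this

lemma ccount_pos [Nonempty H] (τ : Perm H) : 1 ≤ permCycleCount τ := by
  have : Nonempty (Quot τ.SameCycle) := ⟨Quot.mk _ (Classical.arbitrary H)⟩
  exact Nat.card_pos

lemma ccount_ne_one {σ : Perm H} (hσ : σ ≠ 1) : permCycleCount σ + 1 ≤ Fintype.card H := by
  obtain ⟨a, ha⟩ : ∃ a, σ a ≠ a := by
    by_contra hc
    push_neg at hc
    exact hσ (Equiv.ext hc)
  have h := card_add_one_le (Quot.mk σ.SameCycle) Quot.exists_rep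
    (c := a) (d := σ a) (fun hh => ha hh.symm) (Quot.sound ⟨1, by simp [pow_one]⟩)
  simpa [Nat.card_eq_fintype_card, permCycleCount] using h

lemma ccount_one : permCycleCount (1 : Perm H) = Fintype.card H := by
  have hinj : Function.Injective (Quot.mk (1 : Perm H).SameCycle) := by
    intro x y h
    have := (mk_eq_iff_sameCycle _ _ _).mp h
    obtain ⟨i, hi⟩ := this
    simpa using hi
  have hsurj : Function.Surjective (Quot.mk (1 : Perm H).SameCycle) := Quot.exists_rep
  rw [permCycleCount, ← Nat.card_eq_fintype_card]
  exact (Nat.card_eq_of_bijective _ ⟨hinj, hsurj⟩).symm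

lemma orb_pair_one (α : Perm H) :
    Nat.card (Quot (orbRel ({α, 1} : Set (Perm H)))) = permCycleCount α := by
  have hα : α ∈ Subgroup.closure ({α, 1} : Set (Perm H)) := _root_.mem_closure_of_mem (by simp)
  apply le_antisymm
  · exact card_quot_le _ _ (fun x y hxy => sc_mk_orbRel hα hxy)
  · apply card_quot_le
    intro x y hxy
    obtain ⟨g, hg, rfl⟩ := hxy
    refine (closure_respects _ (Quot.mk α.SameCycle) ?_ g hg x).symm
    intro g' hg' x
    rcases hg' with h | h
    · rw [h]
      exact (Quot.sound (⟨1, by simp [pow_one]⟩ : α.SameCycle x (α x))).symm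
    · rw [h]; rfl

/-- ORB1 -/
lemma orb_le_succ (α σ : Perm H) (a : H) :
    Nat.card (Quot (orbRel ({α, Equiv.swap a (σ a) * σ} : Set (Perm H))))
      ≤ Nat.card (Quot (orbRel ({α, σ} : Set (Perm H)))) + 1 := by
  classical
  set b := σ a with hb
  set t := Equiv.swap a b with htdef
  set σ' := t * σ with hσ'
  set T : Set (Perm H) := {α, σ, t} with hT
  have hαT : α ∈ Subgroup.closure T := _root_.mem_closure_of_mem (by simp [hT])
  have hσT : σ ∈ Subgroup.closure T := _root_.mem_closure_of_mem (by simp [hT])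
  have htT : t ∈ Subgroup.closure T := _root_.mem_closure_of_mem (by simp [hT])
  have hσ'T : σ' ∈ Subgroup.closure T := mul_mem htT hσT
  have hsub : ∀ g ∈ Subgroup.closure ({α, σ'} : Set (Perm H)), g ∈ Subgroup.closure T := by
    intro g hg
    refine (Subgroup.closure_le _).mpr ?_ hg
    rintro g' (rfl | rfl)
    · exact hαT
    · exact hσ'T
  have h1 : Nat.card (Quot (orbRel ({α, σ'} : Set (Perm H))))
      ≤ Nat.card (Quot (orbRel T)) + 1 := by
    apply card_quot_le_succ _ _ a b
    · rintro x y ⟨g, hg, rfl⟩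
      exact (mk_orbRel (hsub g hg) x).symm
    · have := mk_orbRel htT a
      rw [htdef] at this
      rw [Equiv.swap_apply_left] at this
      exact this.symm
    · rintro x y ⟨g, hg, rfl⟩
      apply Quot.eqvGen_exact
      set s : H → H → Prop :=
        fun u v => orbRel ({α, σ'} : Set (Perm H)) u v ∨ (u = a ∧ v = b) ∨ (u = b ∧ v = a)
        with hs
      have hgen : ∀ y : H, Quot.mk s (t y) = Quot.mk s y := by
        intro y
        rcases eq_or_ne y a with rfl | hya
        · rw [htdef, Equiv.swap_apply_left]
          exact Quot.sound (Or.inr (Or.inr ⟨rfl, rfl⟩))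
        · rcases eq_or_ne y b with rfl | hyb
          · rw [htdef, Equiv.swap_apply_right]
            exact Quot.sound (Or.inr (Or.inl ⟨rfl, rfl⟩))
          · rw [htdef, Equiv.swap_apply_of_ne_of_ne hya hyb]
      have hgenσ' : ∀ y : H, Quot.mk s (σ' y) = Quot.mk s y := by
        intro y
        have hys : s y (σ' y) := Or.inl ⟨σ', _root_.mem_closure_of_mem (by simp), rfl⟩
        exact (Quot.sound hys).symm
      refine (closure_respects T (Quot.mk s) ?_ g hg x).symm
      intro g' hg' y
      rcases hg' with h | h | h
      · rw [h]
        have hys : s y (α y) := Or.inl ⟨α, _root_.mem_closure_of_mem (by simp), rfl⟩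
        exact (Quot.sound hys).symm
      · rw [h]
        have hσy : σ y = t (σ' y) := by
          rw [hσ', ← Equiv.Perm.mul_apply, ← mul_assoc, htdef, Equiv.swap_mul_self, one_mul]
        rw [hσy, hgen, hgenσ']
      · rw [h]; exact hgen y
  have h2 : Nat.card (Quot (orbRel T))
      ≤ Nat.card (Quot (orbRel ({α, σ} : Set (Perm H)))) := by
    apply card_quot_le
    rintro x y ⟨g, hg, rfl⟩
    have hsub2 : g ∈ Subgroup.closure T := by
      refine (Subgroup.closure_le _).mpr ?_ hg
      rintro g' (rfl | rfl) <;> [exact hαT; exact hσT]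
    exact (mk_orbRel hsub2 x).symm
  omega

/-- ORB2 -/
lemma orb_le_of_merge (α σ : Perm H) (a : H)
    (hab : Quot.mk (orbRel ({α, Equiv.swap a (σ a) * σ} : Set (Perm H))) a
         = Quot.mk (orbRel ({α, Equiv.swap a (σ a) * σ} : Set (Perm H))) (σ a)) :
    Nat.card (Quot (orbRel ({α, Equiv.swap a (σ a) * σ} : Set (Perm H))))
      ≤ Nat.card (Quot (orbRel ({α, σ} : Set (Perm H)))) := by
  classical
  set b := σ a with hb
  set t := Equiv.swap a b with htdef
  set σ' := t * σ with hσ'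
  set r' := orbRel ({α, σ'} : Set (Perm H)) with hr'
  apply card_quot_le
  rintro x y ⟨g, hg, rfl⟩
  have hgen : ∀ y : H, Quot.mk r' (t y) = Quot.mk r' y := by
    intro y
    rcases eq_or_ne y a with rfl | hya
    · rw [htdef, Equiv.swap_apply_left]; exact hab.symm
    · rcases eq_or_ne y b with rfl | hyb
      · rw [htdef, Equiv.swap_apply_right]; exact hab
      · rw [htdef, Equiv.swap_apply_of_ne_of_ne hya hyb]
  refine (closure_respects _ (Quot.mk r') ?_ g hg x).symm
  intro g' hg' y
  rcases hg' with h | h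
  · rw [h]
    have hys : r' y (α y) := ⟨α, _root_.mem_closure_of_mem (by simp), rfl⟩
    exact (Quot.sound hys).symm
  · rw [h]
    have hσy : σ y = t (σ' y) := by
      rw [hσ', ← Equiv.Perm.mul_apply, ← mul_assoc, htdef, Equiv.swap_mul_self, one_mul]
    rw [hσy, hgen]
    have hys : r' y (σ' y) := ⟨σ', _root_.mem_closure_of_mem (by simp), rfl⟩
    exact (Quot.sound hys).symm

theorem main_ineq (α : Perm H) : ∀ (m : ℕ) (σ : Perm H),
    Fintype.card H - permCycleCount σ ≤ m →
    (permCycleCount σ + permCycleCount (σ⁻¹ * α) + permCycleCount α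
      ≤ Fintype.card H + 2 * Nat.card (Quot (orbRel ({α, σ} : Set (Perm H))))) ∧
    Even (permCycleCount σ + permCycleCount (σ⁻¹ * α) + permCycleCount α
      + Fintype.card H) := by
  intro m
  induction m with
  | zero =>
    intro σ hm
    rcases eq_or_ne σ 1 with rfl | hσ
    · rw [ccount_one, inv_one, one_mul, orb_pair_one]
      exact ⟨by omega, ⟨Fintype.card H + permCycleCount α, by ring⟩⟩
    · have := ccount_ne_one hσ
      omega
  | succ m ih =>
    intro σ hm
    rcases eq_or_ne σ 1 with rfl | hσ
    · rw [ccount_one, inv_one, one_mul, orb_pair_one]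
      exact ⟨by omega, ⟨Fintype.card H + permCycleCount α, by ring⟩⟩
    · obtain ⟨a, ha⟩ : ∃ a, σ a ≠ a := by
        by_contra hc; push_neg at hc; exact hσ (Equiv.ext hc)
      set b := σ a with hbdef
      set t := Equiv.swap a b with htdef
      set σ' := t * σ with hσ'def
      have hab : a ≠ b := fun h => ha h.symm
      have hSCab : σ.SameCycle a b := ⟨1, by simp [pow_one, hbdef]⟩
      have hsplitσ : permCycleCount σ' = permCycleCount σ + 1 := split_count hab hSCab
      have hσ'le := ccount_le_card σ'
      have hm' : Fintype.card H - permCycleCount σ' ≤ m := by omega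
      set p := σ⁻¹ a with hpdef
      have hpq : p ≠ a := by
        intro h
        have h2 := congrArg σ h
        rw [hpdef, Equiv.Perm.inv_def, Equiv.apply_symm_apply] at h2
        exact ha h2.symm
      have hqb : σ⁻¹ b = a := by rw [hbdef]; exact Equiv.symm_apply_apply σ a
      have hswapconj : Equiv.swap p a = σ⁻¹ * t * σ := by
        have h1 : Equiv.swap (σ⁻¹ a) (σ⁻¹ b) = σ⁻¹ * Equiv.swap a b * (σ⁻¹)⁻¹ :=
          Equiv.swap_apply_apply σ⁻¹ a b
        rw [inv_inv, hqb] at h1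
        exact h1
      have hkeyeq : σ'⁻¹ * α = Equiv.swap p a * (σ⁻¹ * α) := by
        rw [hswapconj, hσ'def, mul_inv_rev, htdef, Equiv.swap_inv, ← htdef]
        group
      set ρ := σ⁻¹ * α with hρdef
      obtain ⟨hIH1, hIH2⟩ := ih σ' hm'
      by_cases hSC : ρ.SameCycle p a
      · -- split case
        have hc' : permCycleCount (σ'⁻¹ * α) = permCycleCount ρ + 1 := by
          rw [hkeyeq]; exact split_count hpq hSC
        have horb : Nat.card (Quot (orbRel ({α, σ'} : Set (Perm H))))
            ≤ Nat.card (Quot (orbRel ({α, σ} : Set (Perm H)))) + 1 := by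
          rw [hσ'def, htdef, hbdef]; exact orb_le_succ α σ a
        constructor
        · rw [hsplitσ, hc'] at hIH1; omega
        · rw [hsplitσ, hc'] at hIH2
          obtain ⟨k, hk⟩ := hIH2
          exact ⟨k - 1, by omega⟩
      · -- merge case
        have hc' : permCycleCount ρ = permCycleCount (σ'⁻¹ * α) + 1 := by
          rw [hkeyeq]; exact merge_count hpq hSC
        have hscpq : (σ'⁻¹ * α).SameCycle p a := by
          rw [hkeyeq]; exact sameCycle_swap_mul_of_not hpq hSC
        have hσ'mem : σ' ∈ Subgroup.closure ({α, σ'} : Set (Perm H)) :=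
          _root_.mem_closure_of_mem (by simp)
        have hαmem : α ∈ Subgroup.closure ({α, σ'} : Set (Perm H)) :=
          _root_.mem_closure_of_mem (by simp)
        have hσ'αmem : σ'⁻¹ * α ∈ Subgroup.closure ({α, σ'} : Set (Perm H)) :=
          mul_mem (inv_mem hσ'mem) hαmem
        have hmkpq : Quot.mk (orbRel ({α, σ'} : Set (Perm H))) p
            = Quot.mk (orbRel ({α, σ'} : Set (Perm H))) a :=
          sc_mk_orbRel hσ'αmem hscpq
        have hσ'b : σ'⁻¹ b = p := by
          rw [hσ'def, mul_inv_rev, Equiv.Perm.mul_apply, htdef, Equiv.swap_inv,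
            Equiv.swap_apply_right, hpdef]
        have hmkbp : Quot.mk (orbRel ({α, σ'} : Set (Perm H))) b
            = Quot.mk (orbRel ({α, σ'} : Set (Perm H))) p := by
          have hh := mk_orbRel (inv_mem hσ'mem) b
          rw [hσ'b] at hh
          exact hh.symm
        have hmkab : Quot.mk (orbRel ({α, σ'} : Set (Perm H))) a
            = Quot.mk (orbRel ({α, σ'} : Set (Perm H))) b :=
          hmkpq.symm.trans hmkbp.symm
        have horb : Nat.card (Quot (orbRel ({α, σ'} : Set (Perm H))))
            ≤ Nat.card (Quot (orbRel ({α, σ} : Set (Perm H)))) := by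
          rw [hσ'def, htdef, hbdef]
          apply orb_le_of_merge α σ a
          rw [← hbdef, ← htdef, ← hσ'def]
          exact hmkab
        have hρpos : 1 ≤ permCycleCount (σ'⁻¹ * α) := by
          have : Nonempty H := ⟨a⟩
          exact ccount_pos _
        constructor
        · rw [hsplitσ] at hIH1; omega
        · rw [hsplitσ] at hIH2
          obtain ⟨k, hk⟩ := hIH2
          exact ⟨k, by omega⟩

lemma ccount_involution (α : Perm H) (hinv : ∀ h, α (α h) = h) (hfpf : ∀ h, α h ≠ h) :
    2 * permCycleCount α = Fintype.card H := by
  classical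
  letI : Fintype (Quot α.SameCycle) := Fintype.ofFinite _
  have h2 : α ^ 2 = 1 := by
    rw [pow_two]; exact Equiv.ext fun x => hinv x
  have hsc : ∀ x y : H, α.SameCycle x y ↔ (y = x ∨ y = α x) := by
    intro x y
    constructor
    · intro h
      obtain ⟨n, hnlt, hn⟩ := h.exists_pow_eq'
      rcases Nat.even_or_odd n with ⟨k, hk⟩ | ⟨k, hk⟩
      · left
        rw [hk, ← two_mul, pow_mul, h2, one_pow] at hn
        simpa using hn.symm
      · right
        rw [hk, pow_succ, pow_mul, h2, one_pow, one_mul] at hn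
        exact hn.symm
    · rintro (rfl | rfl)
      · exact Equiv.Perm.SameCycle.refl _ _
      · exact ⟨1, by simp [pow_one]⟩
  have hcard : Fintype.card H = ∑ b ∈ Finset.univ,
      (Finset.univ.filter fun x => Quot.mk α.SameCycle x = b).card := by
    rw [← Finset.card_univ]
    exact Finset.card_eq_sum_card_fiberwise (fun x _ => Finset.mem_univ _)
  have hfib : ∀ b : Quot α.SameCycle,
      (Finset.univ.filter fun x => Quot.mk α.SameCycle x = b).card = 2 := by
    intro b
    obtain ⟨x, rfl⟩ := Quot.exists_rep b
    have : (Finset.univ.filter fun z => Quot.mk α.SameCycle z = Quot.mk α.SameCycle x)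
        = ({x, α x} : Finset H) := by
      ext z
      simp only [Finset.mem_filter, Finset.mem_univ, true_and, Finset.mem_insert,
        Finset.mem_singleton]
      rw [mk_eq_iff_sameCycle, hsc]
      constructor
      · rintro (rfl | h)
        · exact Or.inl rfl
        · right
          rw [h, hinv]
      · rintro (rfl | rfl)
        · exact Or.inl rfl
        · right
          rw [hinv]
    rw [this]
    exact Finset.card_pair (Ne.symm (hfpf x))
  rw [hcard, Finset.sum_congr rfl (fun b _ => hfib b), Finset.sum_const,
    Finset.card_univ, smul_eq_mul]
  rw [permCycleCount, Nat.card_eq_fintype_card, mul_comm]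

lemma orb_eq_one (S : Set (Perm H)) [Nonempty H]
    (htrans : ∀ x y : H, ∃ g ∈ Subgroup.closure S, g x = y) :
    Nat.card (Quot (orbRel S)) = 1 := by
  rw [Nat.card_eq_one_iff_unique]
  constructor
  · constructor
    intro c d
    induction c using Quot.ind with | _ x =>
    induction d using Quot.ind with | _ y =>
    exact Quot.sound (htrans x y)
  · exact ⟨Quot.mk _ (Classical.arbitrary H)⟩

theorem stmt2' (e : ℕ) (he : 1 ≤ e)
    (α σ : Equiv.Perm (Fin (2 * e)))
    (hinv : ∀ h, α (α h) = h)
    (hfpf : ∀ h, α h ≠ h)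
    (htrans : ∀ h h' : Fin (2 * e),
      ∃ g ∈ Subgroup.closure ({α, σ} : Set (Equiv.Perm (Fin (2 * e)))), g h = h') :
    (Even ((permCycleCount σ : ℤ) - e + permCycleCount (σ⁻¹ * α)) ∧
      (permCycleCount σ : ℤ) - e + permCycleCount (σ⁻¹ * α) ≤ 2) ∧
    ∃ g : ℕ, (permCycleCount σ : ℤ) - e + permCycleCount (σ⁻¹ * α) = 2 - 2 * g := by
  have hne : Nonempty (Fin (2 * e)) := ⟨⟨0, by omega⟩⟩
  have hcard : Fintype.card (Fin (2 * e)) = 2 * e := Fintype.card_fin _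
  have hα : 2 * permCycleCount α = 2 * e := by
    rw [ccount_involution α hinv hfpf, hcard]
  have horb : Nat.card (Quot (orbRel ({α, σ} : Set (Equiv.Perm (Fin (2 * e)))))) = 1 :=
    orb_eq_one _ htrans
  obtain ⟨h1, h2⟩ := main_ineq α (Fintype.card (Fin (2 * e))) σ (by omega)
  rw [horb, hcard] at h1
  rw [hcard] at h2
  obtain ⟨k, hk⟩ := h2
  set n := permCycleCount σ
  set f := permCycleCount (σ⁻¹ * α)
  set cα := permCycleCount α
  have hcα : cα = e := by omega
  rw [hcα] at h1 hk
  have hk' : (n : ℤ) + f + e + 2 * e = k + k := by exact_mod_cast hk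
  have h1' : (n : ℤ) + f + e ≤ 2 * e + 2 := by exact_mod_cast h1
  refine ⟨⟨⟨(k : ℤ) - 2 * e, by omega⟩, by omega⟩, ⟨(1 - ((k : ℤ) - 2 * e)).toNat, ?_⟩⟩
  have ht : ((1 - ((k : ℤ) - 2 * e)).toNat : ℤ) = 1 - ((k : ℤ) - 2 * e) := by
    rw [Int.toNat_of_nonneg]; omega
  rw [ht]; omega

/-- For a ribbon graph with `e` edges, `n` vertices (cycles of `σ`)
and `f` faces (cycles of `σ⁻¹ ∘ α`), the integer `n - e + f` is even and at
most `2`; equivalently the genus defined by `n - e + f = 2 - 2g` is a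
nonnegative integer. -/
theorem stmt2 (e : ℕ) (he : 1 ≤ e)
    (α σ : Equiv.Perm (Fin (2 * e)))
    (hinv : ∀ h, α (α h) = h)
    (hfpf : ∀ h, α h ≠ h)
    (htrans : ∀ h h' : Fin (2 * e),
      ∃ g ∈ Subgroup.closure ({α, σ} : Set (Equiv.Perm (Fin (2 * e)))), g h = h') :
    (Even ((permCycleCount σ : ℤ) - e + permCycleCount (σ⁻¹ * α)) ∧
      (permCycleCount σ : ℤ) - e + permCycleCount (σ⁻¹ * α) ≤ 2) ∧
    ∃ g : ℕ, (permCycleCount σ : ℤ) - e + permCycleCount (σ⁻¹ * α) = 2 - 2 * g :=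
  stmt2' e he α σ hinv hfpf htrans
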